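/- Let H, H' be complex Hilbert spaces and let Z : H → H' be a continuous linear map admitting a parametrix Q. Then the kernel of Z and the cokernel H'/range(Z) are finite-dimensional, and for the finite-rank operator L_Q on H × H' defined by L_Q(u,v) = (u − Q(Z u), Z(Q v) − v) one has Tr(L_Q) = dim ker(Z) − dim (H'/range(Z)), i.e. the trace of the logarithm equals the Fredholm index of Z. -/

import Mathlib

open LinearMap Submodule

section helpers
variable {V W : Type*} [AddCommGroup V] [Module ℂ V] [AddCommGroup W] [Module ℂ W]

noncomputable def trL (f : V →ₗ[ℂ] V) : ℂ :=
  LinearMap.trace ℂ (LinearMap.range f)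
    (f.restrict (p := LinearMap.range f) (q := LinearMap.range f) (fun x _hx => ⟨x, rfl⟩))

lemma trL_eq (f : V →ₗ[ℂ] V) (p : Submodule ℂ V) [FiniteDimensional ℂ p]
    (hp : ∀ x, f x ∈ p) :
    trL f = LinearMap.trace ℂ p (f.restrict fun x _ => hp x) := by
  have hle : LinearMap.range f ≤ p := by rintro y ⟨x, rfl⟩; exact hp x
  set g : p →ₗ[ℂ] p := f.restrict fun x _ => hp x with hg
  have hgmem : ∀ x : p, g x ∈ (LinearMap.range f).comap p.subtype := by
    intro x; simp [hg, mem_comap, restrict_apply]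
  rw [← LinearMap.trace_restrict_eq_of_forall_mem _ g hgmem]
  set e := Submodule.comapSubtypeEquivOfLe hle
  have : e.conj (g.restrict fun x _ => hgmem x) =
      f.restrict (p := LinearMap.range f) (q := LinearMap.range f) (fun x _hx => ⟨x, rfl⟩) := by
    ext x
    simp [LinearEquiv.conj_apply, restrict_apply, coe_restrict_apply, e, Submodule.comapSubtypeEquivOfLe, hg]; rfl
  rw [trL, ← this, LinearMap.trace_conj']

lemma trL_add (f g : V →ₗ[ℂ] V) [FiniteDimensional ℂ (LinearMap.range f)]
    [FiniteDimensional ℂ (LinearMap.range g)] :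
    trL (f + g) = trL f + trL g := by
  set p := LinearMap.range f ⊔ LinearMap.range g with hp
  have hf : ∀ x, f x ∈ p := fun x => Submodule.mem_sup_left (mem_range_self f x)
  have hg : ∀ x, g x ∈ p := fun x => Submodule.mem_sup_right (mem_range_self g x)
  have hfg : ∀ x, (f + g) x ∈ p := fun x => add_mem (hf x) (hg x)
  rw [trL_eq f p hf, trL_eq g p hg, trL_eq (f + g) p hfg, ← map_add]
  congr 1

lemma trL_neg (f : V →ₗ[ℂ] V) [FiniteDimensional ℂ (LinearMap.range f)] :
    trL (-f) = -trL f := by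
  have hf : ∀ x, f x ∈ LinearMap.range f := fun x => mem_range_self f x
  have hnf : ∀ x, (-f) x ∈ LinearMap.range f := fun x => neg_mem (hf x)
  rw [trL_eq (-f) _ hnf, trL_eq f _ hf, ← map_neg]
  congr 1

lemma trL_comm (S : V →ₗ[ℂ] W) (R : W →ₗ[ℂ] V)
    [FiniteDimensional ℂ (LinearMap.range R)] :
    trL (R ∘ₗ S) = trL (S ∘ₗ R) := by
  set r := LinearMap.range R with hr
  set p := r.map S with hpdef
  set u : r →ₗ[ℂ] p := (S ∘ₗ r.subtype).codRestrict p
    (fun x => Submodule.mem_map_of_mem x.2) with hu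
  set v : p →ₗ[ℂ] r := (R ∘ₗ p.subtype).codRestrict r
    (fun x => mem_range_self R _) with hv
  have h1 : ∀ x, (R ∘ₗ S) x ∈ r := fun x => mem_range_self R (S x)
  have h2 : ∀ x, (S ∘ₗ R) x ∈ p := fun x => Submodule.mem_map_of_mem (mem_range_self R x)
  rw [trL_eq _ r h1, trL_eq _ p h2]
  have e1 : (R ∘ₗ S).restrict (fun x _ => h1 x) = v ∘ₗ u := by
    ext x; simp [restrict_apply, hu, hv]
  have e2 : (S ∘ₗ R).restrict (fun x _ => h2 x) = u ∘ₗ v := by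
    ext x; simp [restrict_apply, hu, hv]
  rw [e1, e2, LinearMap.trace_comp_comm']

lemma trL_prodMap (A : V →ₗ[ℂ] V) (B : W →ₗ[ℂ] W)
    [FiniteDimensional ℂ (LinearMap.range A)] [FiniteDimensional ℂ (LinearMap.range B)] :
    trL (A.prodMap B) = trL A + trL B := by
  have h : A.prodMap B = (inl ℂ V W ∘ₗ A) ∘ₗ fst ℂ V W + (inr ℂ V W ∘ₗ B) ∘ₗ snd ℂ V W := by
    ext x <;> simp
  haveI i1 : FiniteDimensional ℂ (LinearMap.range (inl ℂ V W ∘ₗ A)) := by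
    rw [LinearMap.range_comp]; infer_instance
  haveI i2 : FiniteDimensional ℂ (LinearMap.range (inr ℂ V W ∘ₗ B)) := by
    rw [LinearMap.range_comp]; infer_instance
  haveI : FiniteDimensional ℂ (LinearMap.range ((inl ℂ V W ∘ₗ A) ∘ₗ fst ℂ V W)) :=
    Submodule.finiteDimensional_of_le (LinearMap.range_comp_le_range _ _)
  haveI : FiniteDimensional ℂ (LinearMap.range ((inr ℂ V W ∘ₗ B) ∘ₗ snd ℂ V W)) :=
    Submodule.finiteDimensional_of_le (LinearMap.range_comp_le_range _ _)
  rw [h, trL_add, trL_comm (fst ℂ V W) (inl ℂ V W ∘ₗ A), trL_comm (snd ℂ V W) (inr ℂ V W ∘ₗ B)]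
  congr 1

lemma trL_proj (f : V →ₗ[ℂ] V) [FiniteDimensional ℂ (LinearMap.range f)]
    (h : ∀ x ∈ LinearMap.range f, f x = x) :
    trL f = (Module.finrank ℂ (LinearMap.range f) : ℂ) := by
  rw [trL]
  have : (f.restrict (p := LinearMap.range f) (q := LinearMap.range f) (fun x _hx => ⟨x, rfl⟩))
      = LinearMap.id := by
    ext x; simp [restrict_apply, coe_restrict_apply, h x x.2]; exact Subtype.ext (h x x.2)
  rw [this, LinearMap.trace_id]

lemma trL_negproj (f : V →ₗ[ℂ] V) [FiniteDimensional ℂ (LinearMap.range f)]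
    (h : ∀ x ∈ LinearMap.range f, f x = -x) :
    trL f = -(Module.finrank ℂ (LinearMap.range f) : ℂ) := by
  rw [trL]
  have : (f.restrict (p := LinearMap.range f) (q := LinearMap.range f) (fun x _hx => ⟨x, rfl⟩))
      = -LinearMap.id := by
    ext x; simp [restrict_apply, coe_restrict_apply, h x x.2]; exact h x x.2
  rw [this, map_neg, LinearMap.trace_id]

end helpers

/-- A continuous linear map is of finite rank if its range is finite dimensional. -/
def FiniteRank {V W : Type*} [NormedAddCommGroup V] [NormedSpace ℂ V]
    [NormedAddCommGroup W] [NormedSpace ℂ W] (T : V →L[ℂ] W) : Prop :=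
  FiniteDimensional ℂ (LinearMap.range (T : V →ₗ[ℂ] W))

/-- `Q` is a parametrix for `Z`: `Q∘Z - id` and `Z∘Q - id` are finite rank. -/
def IsParametrix {H H' : Type*} [NormedAddCommGroup H] [NormedSpace ℂ H]
    [NormedAddCommGroup H'] [NormedSpace ℂ H']
    (Z : H →L[ℂ] H') (Q : H' →L[ℂ] H) : Prop :=
  FiniteRank (Q.comp Z - ContinuousLinearMap.id ℂ H) ∧
    FiniteRank (Z.comp Q - ContinuousLinearMap.id ℂ H')

/-- The logarithm `L_Q (u, v) = (u − Q(Z u), Z(Q v) − v)` on `H × H'`. -/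
noncomputable def Lop {H H' : Type*} [NormedAddCommGroup H] [NormedSpace ℂ H]
    [NormedAddCommGroup H'] [NormedSpace ℂ H']
    (Z : H →L[ℂ] H') (Q : H' →L[ℂ] H) : (H × H') →L[ℂ] (H × H') :=
  ((ContinuousLinearMap.id ℂ H - Q.comp Z).comp (ContinuousLinearMap.fst ℂ H H')).prod
    ((Z.comp Q - ContinuousLinearMap.id ℂ H').comp (ContinuousLinearMap.snd ℂ H H'))

/-- The trace of a (finite-rank) continuous operator `T`, defined as the trace of the
endomorphism induced by `T` on the subspace `range T`. -/
noncomputable def fTrace {V : Type*} [NormedAddCommGroup V] [NormedSpace ℂ V]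
    (T : V →L[ℂ] V) : ℂ :=
  LinearMap.trace ℂ (LinearMap.range (T : V →ₗ[ℂ] V))
    ((T : V →ₗ[ℂ] V).restrict
      (p := LinearMap.range (T : V →ₗ[ℂ] V)) (q := LinearMap.range (T : V →ₗ[ℂ] V))
      (fun x _hx => ⟨x, rfl⟩))

theorem stmt2 {H H' : Type*}
    [NormedAddCommGroup H] [InnerProductSpace ℂ H] [CompleteSpace H]
    [NormedAddCommGroup H'] [InnerProductSpace ℂ H'] [CompleteSpace H']
    (Z : H →L[ℂ] H') (Q : H' →L[ℂ] H) (hQ : IsParametrix Z Q) :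
    FiniteDimensional ℂ (LinearMap.ker (Z : H →ₗ[ℂ] H')) ∧
    FiniteDimensional ℂ (H' ⧸ LinearMap.range (Z : H →ₗ[ℂ] H')) ∧
    fTrace (Lop Z Q) =
      (Module.finrank ℂ (LinearMap.ker (Z : H →ₗ[ℂ] H')) : ℂ) -
        (Module.finrank ℂ (H' ⧸ LinearMap.range (Z : H →ₗ[ℂ] H')) : ℂ) := by
  classical
  set Zl : H →ₗ[ℂ] H' := (Z : H →ₗ[ℂ] H') with hZl
  set Ql : H' →ₗ[ℂ] H := (Q : H' →ₗ[ℂ] H) with hQl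
  set A : H →ₗ[ℂ] H := LinearMap.id - Ql ∘ₗ Zl with hA
  set B : H' →ₗ[ℂ] H' := Zl ∘ₗ Ql - LinearMap.id with hB
  -- transfer the finite-rank hypotheses
  have hcoe1 : ((Q.comp Z - ContinuousLinearMap.id ℂ H : H →L[ℂ] H) : H →ₗ[ℂ] H)
      = -A := by ext x; simp [hA]; rfl
  have hcoe2 : ((Z.comp Q - ContinuousLinearMap.id ℂ H' : H' →L[ℂ] H') : H' →ₗ[ℂ] H')
      = B := by ext x; simp [hB]; rfl
  haveI hFB : FiniteDimensional ℂ (LinearMap.range B) := by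
    have := hQ.2; rw [IsParametrix] at hQ; rw [← hcoe2]; exact hQ.2
  haveI hFA : FiniteDimensional ℂ (LinearMap.range A) := by
    have h := hQ.1
    rw [FiniteRank, hcoe1, LinearMap.range_neg] at h
    exact h
  -- kernel is finite dimensional
  have hkerle : LinearMap.ker Zl ≤ LinearMap.range A := by
    intro x hx
    exact ⟨x, by simp [hA, LinearMap.mem_ker.mp hx]⟩
  haveI hker : FiniteDimensional ℂ (LinearMap.ker Zl) :=
    Submodule.finiteDimensional_of_le hkerle
  -- cokernel is finite dimensional
  haveI hcoker : FiniteDimensional ℂ (H' ⧸ LinearMap.range Zl) := by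
    apply Module.Finite.of_surjective
      ((LinearMap.range Zl).mkQ ∘ₗ (LinearMap.range B).subtype)
    intro c
    obtain ⟨v, rfl⟩ := Submodule.mkQ_surjective _ c
    refine ⟨⟨-(B v), neg_mem (mem_range_self B v)⟩, ?_⟩
    have h1 : -(B v) = v - Zl (Ql v) := by
      rw [hB]; simp only [LinearMap.sub_apply, comp_apply, id_apply, neg_sub]
    simp only [comp_apply, Submodule.subtype_apply, h1, map_sub, Submodule.mkQ_apply]
    rw [(Submodule.Quotient.mk_eq_zero _).mpr (mem_range_self Zl (Ql v)), sub_zero]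
  refine ⟨hker, hcoker, ?_⟩
  -- complements
  obtain ⟨M₁, hM⟩ := Submodule.exists_isCompl (LinearMap.ker Zl)
  obtain ⟨N₁, hN⟩ := Submodule.exists_isCompl (LinearMap.range Zl)
  have eN : (H' ⧸ LinearMap.range Zl) ≃ₗ[ℂ] N₁ :=
    Submodule.quotientEquivOfIsCompl _ _ hN
  haveI hFN : FiniteDimensional ℂ N₁ := Module.Finite.equiv eN
  -- the bijection M₁ ≃ range Zl
  set Z' : M₁ →ₗ[ℂ] (LinearMap.range Zl) :=
    (Zl ∘ₗ M₁.subtype).codRestrict _ (fun x => mem_range_self Zl (↑x : H)) with hZ'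
  have hZ'coe : ∀ m : M₁, (Z' m : H') = Zl (↑m : H) := fun m => rfl
  have hinj : Function.Injective Z' := by
    rw [← LinearMap.ker_eq_bot, LinearMap.ker_eq_bot']
    intro m hm
    have h0 : Zl (↑m : H) = 0 := by rw [← hZ'coe m, hm]; rfl
    exact Subtype.ext (Submodule.disjoint_def.mp hM.disjoint (↑m : H) (LinearMap.mem_ker.mpr h0) m.2)
  have hsurj : Function.Surjective Z' := by
    rintro ⟨y, x, rfl⟩
    obtain ⟨k, m, hk, hm, hx⟩ := Submodule.codisjoint_iff_exists_add_eq.mp hM.codisjoint x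
    refine ⟨⟨m, hm⟩, Subtype.ext ?_⟩
    rw [hZ'coe]
    show Zl m = Zl x
    rw [← hx, map_add, LinearMap.mem_ker.mp hk, zero_add]
  set e : M₁ ≃ₗ[ℂ] (LinearMap.range Zl) := LinearEquiv.ofBijective Z' ⟨hinj, hsurj⟩ with he
  have hecoe : ∀ m : M₁, (e m : H') = Zl (↑m : H) := fun m => rfl
  -- the pseudo-inverse
  set Q₀ : H' →ₗ[ℂ] H := M₁.subtype ∘ₗ (e.symm : (LinearMap.range Zl) →ₗ[ℂ] M₁) ∘ₗ
    Submodule.projectionOnto (LinearMap.range Zl) N₁ hN with hQ₀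
  have k1 : ∀ y (hy : y ∈ LinearMap.range Zl), Zl (Q₀ y) = y := by
    intro y hy
    have hproj : Submodule.projectionOnto (LinearMap.range Zl) N₁ hN y = ⟨y, hy⟩ :=
      Submodule.projectionOnto_apply_left hN ⟨y, hy⟩
    simp only [hQ₀, comp_apply, Submodule.subtype_apply, LinearEquiv.coe_coe, hproj]
    rw [← hecoe, e.apply_symm_apply]
  have k2 : ∀ y ∈ N₁, Q₀ y = 0 := by
    intro y hy
    simp only [hQ₀, comp_apply, Submodule.subtype_apply, LinearEquiv.coe_coe,
      Submodule.projectionOnto_apply_of_mem_right hN hy, map_zero]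
  set A₀ : H →ₗ[ℂ] H := LinearMap.id - Q₀ ∘ₗ Zl with hA₀
  set B₀ : H' →ₗ[ℂ] H' := Zl ∘ₗ Q₀ - LinearMap.id with hB₀
  have a0mem : ∀ x, A₀ x ∈ LinearMap.ker Zl := by
    intro x
    rw [LinearMap.mem_ker]
    simp only [hA₀, LinearMap.sub_apply, id_apply, comp_apply, map_sub]
    rw [k1 (Zl x) (mem_range_self Zl x), sub_self]
  have a0fix : ∀ k ∈ LinearMap.ker Zl, A₀ k = k := by
    intro k hk
    simp [hA₀, LinearMap.mem_ker.mp hk]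
  have hrangeA₀ : LinearMap.range A₀ = LinearMap.ker Zl := by
    refine le_antisymm ?_ (fun k hk => ⟨k, a0fix k hk⟩)
    rintro y ⟨x, rfl⟩
    exact a0mem x
  haveI hFA₀ : FiniteDimensional ℂ (LinearMap.range A₀) := by rw [hrangeA₀]; exact hker
  have b0zero : ∀ y ∈ LinearMap.range Zl, B₀ y = 0 := by
    intro y hy
    simp only [hB₀, LinearMap.sub_apply, id_apply, comp_apply]
    rw [k1 y hy, sub_self]
  have b0neg : ∀ y ∈ N₁, B₀ y = -y := by
    intro y hy
    simp only [hB₀, LinearMap.sub_apply, id_apply, comp_apply]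
    rw [k2 y hy, map_zero, zero_sub]
  have b0mem : ∀ y, B₀ y ∈ N₁ := by
    intro y
    obtain ⟨r, n, hr, hn, hy⟩ := Submodule.codisjoint_iff_exists_add_eq.mp hN.codisjoint y
    rw [← hy, map_add, b0zero r hr, b0neg n hn, zero_add]
    exact neg_mem hn
  have hrangeB₀ : LinearMap.range B₀ = N₁ := by
    refine le_antisymm ?_ (fun n hn => ⟨-n, by rw [map_neg, b0neg n hn, neg_neg]⟩)
    rintro y ⟨x, rfl⟩
    exact b0mem x
  haveI hFB₀ : FiniteDimensional ℂ (LinearMap.range B₀) := by rw [hrangeB₀]; exact hFN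
  -- trace of A₀ and B₀
  have tA₀ : trL A₀ = (Module.finrank ℂ (LinearMap.ker Zl) : ℂ) := by
    rw [trL_proj A₀ (fun x hx => a0fix x (hrangeA₀ ▸ hx)), hrangeA₀]
  have tB₀ : trL B₀ = -(Module.finrank ℂ (H' ⧸ LinearMap.range Zl) : ℂ) := by
    rw [trL_negproj B₀ (fun x hx => b0neg x (hrangeB₀ ▸ hx)), hrangeB₀, eN.finrank_eq]
  -- the difference D
  set D : H' →ₗ[ℂ] H := Q₀ - Ql with hD
  haveI hFD : FiniteDimensional ℂ (LinearMap.range D) := by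
    have hDeq : D = Q₀ ∘ₗ (-B) + (-A₀) ∘ₗ Ql := by
      ext y
      simp only [hD, hA₀, hB, LinearMap.sub_apply, LinearMap.add_apply, comp_apply, LinearMap.neg_apply, id_apply, map_sub,
        map_neg]
      abel
    haveI h1 : FiniteDimensional ℂ (LinearMap.range (Q₀ ∘ₗ (-B))) := by
      rw [LinearMap.range_comp, LinearMap.range_neg]; infer_instance
    haveI h2 : FiniteDimensional ℂ (LinearMap.range ((-A₀) ∘ₗ Ql)) :=
      Submodule.finiteDimensional_of_le
        (le_trans (LinearMap.range_comp_le_range _ _) (by rw [LinearMap.range_neg]))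
    have hle : LinearMap.range D ≤
        LinearMap.range (Q₀ ∘ₗ (-B)) ⊔ LinearMap.range ((-A₀) ∘ₗ Ql) := by
      rintro y ⟨x, rfl⟩
      rw [hDeq]
      exact add_mem (Submodule.mem_sup_left (mem_range_self _ x))
        (Submodule.mem_sup_right (mem_range_self _ x))
    exact Submodule.finiteDimensional_of_le hle
  haveI : FiniteDimensional ℂ (LinearMap.range (D ∘ₗ Zl)) :=
    Submodule.finiteDimensional_of_le (LinearMap.range_comp_le_range _ _)
  haveI : FiniteDimensional ℂ (LinearMap.range (Zl ∘ₗ D)) := by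
    rw [LinearMap.range_comp]; infer_instance
  haveI : FiniteDimensional ℂ (LinearMap.range (-(Zl ∘ₗ D))) := by
    rw [LinearMap.range_neg]; rw [LinearMap.range_comp]; infer_instance
  -- decomposition of A and B
  have hAeq : A = A₀ + D ∘ₗ Zl := by
    ext x
    simp only [hA, hA₀, hD, LinearMap.sub_apply, LinearMap.add_apply, comp_apply, id_apply, LinearMap.sub_apply]
    abel
  have hBeq : B = B₀ + -(Zl ∘ₗ D) := by
    ext x
    simp only [hB, hB₀, hD, LinearMap.sub_apply, LinearMap.add_apply, comp_apply, id_apply, LinearMap.neg_apply, map_sub]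
    abel
  have t1 : trL A = trL A₀ + trL (D ∘ₗ Zl) := by rw [hAeq, trL_add]
  have t2 : trL B = trL B₀ - trL (Zl ∘ₗ D) := by rw [hBeq, trL_add, trL_neg, sub_eq_add_neg]
  have t3 : trL (D ∘ₗ Zl) = trL (Zl ∘ₗ D) := trL_comm Zl D
  -- assemble
  have hLop : ((Lop Z Q : (H × H') →L[ℂ] (H × H')) : (H × H') →ₗ[ℂ] (H × H'))
      = A.prodMap B := by
    ext x <;> simp [Lop, hA, hB, hZl, hQl]
  have : fTrace (Lop Z Q) = trL ((Lop Z Q : (H × H') →L[ℂ] (H × H')) :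
      (H × H') →ₗ[ℂ] (H × H')) := rfl
  rw [this, hLop, trL_prodMap, t1, t2, t3, tA₀, tB₀]
  ring
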